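/- arXiv:math/0401022 — 2 statements merged into one kernel-verified Lean document; each statement's English description precedes it below -/
import Mathlib

section
/- Fix N ≥ 1. Place 2N vortices on the equator of the unit sphere at xⱼ = (cos(jπ/N), sin(jπ/N), 0) with alternating vorticities λⱼ = (−1)^j, for j = 1, …, 2N. Then this configuration is an equilibrium of the spherical vortex system: Fⱼ(x) = Σ_{k≠j} λ_k (x_k × xⱼ)/(1 − ⟨xⱼ, x_k⟩) = 0 for every j. -/
noncomputable section

/-- Euclidean 3-space. -/
abbrev E3 := EuclideanSpace ℝ (Fin 3)

/-- The cross product in `ℝ³`. -/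
def cross (u v : E3) : E3 :=
  WithLp.toLp 2 ![u 1 * v 2 - u 2 * v 1, u 2 * v 0 - u 0 * v 2, u 0 * v 1 - u 1 * v 0]

/-- The vortex vector field on the sphere:
`F i x = ∑_{j ≠ i} λ j • (x j × x i) / (1 - ⟨x i, x j⟩)`. -/
def vortexF {ι : Type*} [Fintype ι] [DecidableEq ι] (lam : ι → ℝ) (x : ι → E3) (i : ι) : E3 :=
  ∑ j ∈ Finset.univ.erase i, (lam j / (1 - (inner ℝ (x i) (x j) : ℝ))) • cross (x j) (x i)

/-- The Hamiltonian of the point-vortex system on the sphere: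
`H x = ∑_{i<j} λ i * λ j * ln (‖x i - x j‖² / 2)`. -/
def sphereH {N : ℕ} (lam : Fin N → ℝ) (x : Fin N → E3) : ℝ :=
  ∑ i, ∑ j, if i < j then lam i * lam j * Real.log (‖x i - x j‖ ^ 2 / 2) else 0

/-- A unit vector in the equatorial plane at angle `θ`. -/
def vec (θ : ℝ) : E3 := WithLp.toLp 2 ![Real.cos θ, Real.sin θ, 0]

lemma inner_planar (θ φ : ℝ) : (inner ℝ (vec θ) (vec φ) : ℝ) = Real.cos (θ - φ) := by
  simp [vec, PiLp.inner_apply, Fin.sum_univ_three, Real.cos_sub]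
  ring

lemma cross_planar (θ φ : ℝ) : cross (vec φ) (vec θ) = WithLp.toLp 2 ![0, 0, Real.sin (θ - φ)] := by
  unfold cross vec
  ext i
  fin_cases i <;> simp [Real.sin_sub] <;> ring

lemma smul_planar (c s : ℝ) : c • (WithLp.toLp 2 ![0, 0, s] : E3) = (c * s) • (WithLp.toLp 2 ![0,0,1] : E3) := by
  ext i
  fin_cases i <;> simp

/-- Division-with-remainder data for the reflection index. -/
lemma gvals (n jv kv : ℕ) (hn : 0 < n) (hk : kv < n) (hj : jv < n) :
    ∃ q ≤ 2, n * q + (2*jv + (n - kv)) % n = 2*jv + (n - kv) := by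
  refine ⟨(2*jv + (n - kv)) / n, ?_, Nat.div_add_mod _ n⟩
  have h3 : 2*jv + (n - kv) < 3 * n := by omega
  have := (Nat.div_lt_iff_lt_mul hn).2 h3
  omega

open Real in
/-- The equatorial ring of `2N` vortices with alternating vorticities `±1`
(the configuration `D_{2Nh}(R_e)`) is an equilibrium of the spherical vortex system. -/
theorem alternating_equatorial_ring_equilibrium {N : ℕ} (hN : 1 ≤ N)
    (x : Fin (2 * N) → E3) (lam : Fin (2 * N) → ℝ)
    (hx : ∀ j, x j = ![Real.cos ((j : ℕ) * Real.pi / N),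
                       Real.sin ((j : ℕ) * Real.pi / N), 0])
    (hlam : ∀ j, lam j = (-1 : ℝ) ^ (j : ℕ)) :
    ∀ j, vortexF lam x j = 0 := by
  have hn : 0 < 2 * N := by omega
  have hNr : (N : ℝ) ≠ 0 := by positivity
  intro j
  set A : Fin (2*N) → ℝ := fun k => (k : ℕ) * π / N with hA
  have hx' : ∀ k, x k = vec (A k) := fun k => congrArg (WithLp.toLp 2) (hx k)
  set c : Fin (2*N) → ℝ :=
    fun k => lam k / (1 - Real.cos (A j - A k)) * Real.sin (A j - A k) with hc
  have hterm : ∀ k, (lam k / (1 - (inner ℝ (x j) (x k) : ℝ))) • cross (x k) (x j)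
      = (c k) • (WithLp.toLp 2 ![0,0,1] : E3) := by
    intro k
    rw [hx' j, hx' k, inner_planar, cross_planar, smul_planar]
  set g : Fin (2*N) → Fin (2*N) :=
    fun k => ⟨(2*(j:ℕ) + (2*N - (k:ℕ))) % (2*N), Nat.mod_lt _ hn⟩ with hg
  have hgval : ∀ k, ((g k : Fin (2*N)) : ℕ) = (2*(j:ℕ) + (2*N - (k:ℕ))) % (2*N) :=
    fun _ => rfl
  have hgq : ∀ k : Fin (2*N), ∃ q ≤ 2,
      2*N*q + ((g k : Fin (2*N)) : ℕ) = 2*(j:ℕ) + (2*N - (k:ℕ)) := by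
    intro k
    obtain ⟨q, hq2, hq⟩ := gvals (2*N) j k hn k.isLt j.isLt
    exact ⟨q, hq2, by rw [hgval]; exact hq⟩
  have hsum0 : ∑ k ∈ Finset.univ.erase j, c k = 0 := by
    refine Finset.sum_involution (fun k _ => g k) ?_ ?_ ?_ ?_
    · -- pairing: c k + c (g k) = 0
      intro k hk
      show c k + c (g k) = 0
      obtain ⟨q, hq2, hq⟩ := hgq k
      have hkn : (k:ℕ) < 2*N := k.isLt
      have hjn : (j:ℕ) < 2*N := j.isLt
      -- abstract the value of g k
      obtain ⟨r, hrM⟩ : ∃ r, (2*(j:ℕ) + (2*N - (k:ℕ))) % (2*N) = r := ⟨_, rfl⟩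
      rw [hgval, hrM] at hq
      have hrn : r < 2*N := hrM ▸ Nat.mod_lt _ hn
      -- angle identity
      have hzr : (r : ℝ) = 2*(j:ℕ) + 2*N - (k:ℕ) - 2*N*q := by
        have hnat : r + (k:ℕ) + 2*N*q = 2*(j:ℕ) + 2*N := by omega
        have hcast : ((r + (k:ℕ) + 2*N*q : ℕ) : ℝ) = ((2*(j:ℕ) + 2*N : ℕ) : ℝ) := by
          exact_mod_cast congrArg (Nat.cast : ℕ → ℝ) hnat
        push_cast at hcast
        linarith
      have hang : (j:ℕ) * π / N - (r : ℝ) * π / N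
          = -((j:ℕ) * π / N - (k:ℕ) * π / N) + ((q:ℤ) - 1) * (2*π) := by
        rw [hzr]
        push_cast
        field_simp
        ring
      have hcos : Real.cos ((j:ℕ) * π / N - (r:ℝ) * π / N)
          = Real.cos ((j:ℕ) * π / N - (k:ℕ) * π / N) := by
        rw [hang]
        have h1 : -((j:ℕ) * π / N - (k:ℕ) * π / N) + ((q:ℤ) - 1) * (2*π)
            = (-((j:ℕ) * π / N - (k:ℕ) * π / N)) + (((q:ℤ) - 1) : ℤ) * (2*π) := by push_cast; ring
        rw [h1, Real.cos_add_int_mul_two_pi, Real.cos_neg]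
      have hsin : Real.sin ((j:ℕ) * π / N - (r:ℝ) * π / N)
          = - Real.sin ((j:ℕ) * π / N - (k:ℕ) * π / N) := by
        rw [hang]
        have h1 : -((j:ℕ) * π / N - (k:ℕ) * π / N) + ((q:ℤ) - 1) * (2*π)
            = (-((j:ℕ) * π / N - (k:ℕ) * π / N)) + (((q:ℤ) - 1) : ℤ) * (2*π) := by push_cast; ring
        rw [h1, Real.sin_add_int_mul_two_pi, Real.sin_neg]
      -- parity
      have hpar : r % 2 = (k:ℕ) % 2 := by
        rcases (by omega : q = 0 ∨ q = 1 ∨ q = 2) with rfl | rfl | rfl <;> omega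
      have hlamr : (-1 : ℝ) ^ r = (-1 : ℝ) ^ (k:ℕ) := by
        rcases Nat.even_or_odd (k:ℕ) with h | h
        · have h2 : (k:ℕ) % 2 = 0 := Nat.even_iff.1 h
          rw [(Nat.even_iff.2 (by omega : r % 2 = 0)).neg_one_pow, h.neg_one_pow]
        · have h2 : (k:ℕ) % 2 = 1 := Nat.odd_iff.1 h
          rw [(Nat.odd_iff.2 (by omega : r % 2 = 1)).neg_one_pow, h.neg_one_pow]
      simp only [hc, hlam, hA]
      simp only [hgval, hrM]
      rw [hcos, hsin, hlamr]
      ring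
    · -- fixed points have zero term
      intro k hk hck
      have hkj : (k:ℕ) ≠ (j:ℕ) := by
        have := (Finset.mem_erase.1 hk).1
        exact fun h => this (Fin.ext h)
      intro hgk
      apply hck
      show c k = 0
      obtain ⟨q, hq2, hq⟩ := hgq k
      have hval : ((g k : Fin (2*N)) : ℕ) = (k:ℕ) := congrArg Fin.val hgk
      rw [hval] at hq
      have hkn : (k:ℕ) < 2*N := k.isLt
      have hjn : (j:ℕ) < 2*N := j.isLt
      have hcase : (k:ℕ) = (j:ℕ) + N ∨ (j:ℕ) = (k:ℕ) + N := by
        rcases (by omega : q = 0 ∨ q = 1 ∨ q = 2) with rfl | rfl | rfl <;> omega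
      have hsin0 : Real.sin (A j - A k) = 0 := by
        rcases hcase with h | h
        · have he : A j - A k = -π := by
            rw [hA]
            show (j:ℕ) * π / N - (k:ℕ) * π / N = -π
            rw [h]; push_cast; field_simp; ring
          rw [he, Real.sin_neg, Real.sin_pi, neg_zero]
        · have he : A j - A k = π := by
            rw [hA]
            show (j:ℕ) * π / N - (k:ℕ) * π / N = π
            rw [h]; push_cast; field_simp; ring
          rw [he, Real.sin_pi]
      rw [hc]
      show lam k / (1 - Real.cos (A j - A k)) * Real.sin (A j - A k) = 0
      rw [hsin0, mul_zero]
    · -- maps into the erase set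
      intro k hk
      have hkj : (k:ℕ) ≠ (j:ℕ) := by
        have := (Finset.mem_erase.1 hk).1
        exact fun h => this (Fin.ext h)
      simp only [Finset.mem_erase, Finset.mem_univ, and_true]
      intro h
      obtain ⟨q, hq2, hq⟩ := hgq k
      have hval : ((g k : Fin (2*N)) : ℕ) = (j:ℕ) := congrArg Fin.val h
      rw [hval] at hq
      have hkn : (k:ℕ) < 2*N := k.isLt
      have hjn : (j:ℕ) < 2*N := j.isLt
      exact hkj (by rcases (by omega : q = 0 ∨ q = 1 ∨ q = 2) with rfl | rfl | rfl <;> omega)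
    · -- involution
      intro k hk
      show g (g k) = k
      obtain ⟨q, hq2, hq⟩ := hgq k
      obtain ⟨q', hq2', hq'⟩ := hgq (g k)
      have h1 : ((g k : Fin (2*N)) : ℕ) < 2*N := (g k).isLt
      have h2 : ((g (g k) : Fin (2*N)) : ℕ) < 2*N := (g (g k)).isLt
      have hkn : (k:ℕ) < 2*N := k.isLt
      have hjn : (j:ℕ) < 2*N := j.isLt
      apply Fin.ext
      rcases (by omega : q = 0 ∨ q = 1 ∨ q = 2) with rfl | rfl | rfl <;>
        rcases (by omega : q' = 0 ∨ q' = 1 ∨ q' = 2) with rfl | rfl | rfl <;> omega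
  calc vortexF lam x j
      = ∑ k ∈ Finset.univ.erase j, (c k) • (WithLp.toLp 2 ![0,0,1] : E3) := by
        unfold vortexF
        exact Finset.sum_congr rfl fun k _ => hterm k
    _ = (∑ k ∈ Finset.univ.erase j, c k) • (WithLp.toLp 2 ![0,0,1] : E3) := (Finset.sum_smul).symm
    _ = 0 := by rw [hsum0, zero_smul]
end
end

section
/- Place eight vortices at the vertices of the cube inscribed in the unit sphere, i.e. at the points v = (ε₁, ε₂, ε₃)/√3 with ε₁, ε₂, ε₃ ∈ {−1, +1}, and give the vertex v the vorticity λ_v = ε₁ε₂ε₃ (so the four vertices of one regular tetrahedron carry vorticity +1 and the four vertices of the dual tetrahedron carry vorticity −1). Then this configuration is an equilibrium of the spherical vortex system: at each vertex v, Σ_{w≠v} λ_w (w × v)/(1 − ⟨v, w⟩) = 0. -/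
noncomputable section

set_option maxHeartbeats 4000000 in
/-- The cube of alternating vortices (a regular tetrahedron of vortices `+1` together with
its dual tetrahedron of vortices `-1`, the configuration `(𝕋ₕ, 𝕋)(v̂)`) is an equilibrium
of the spherical vortex system. -/
theorem cube_alternating_equilibrium
    (sgn : Fin 2 → ℝ) (hsgn : sgn = ![1, -1])
    (x : Fin 2 × Fin 2 × Fin 2 → E3) (lam : Fin 2 × Fin 2 × Fin 2 → ℝ)
    (hx : ∀ ε, x ε = ![sgn ε.1 / Real.sqrt 3, sgn ε.2.1 / Real.sqrt 3,
                       sgn ε.2.2 / Real.sqrt 3])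
    (hlam : ∀ ε, lam ε = sgn ε.1 * sgn ε.2.1 * sgn ε.2.2) :
    ∀ ε, vortexF lam x ε = 0 := by
  subst hsgn
  intro ε
  have hzero : (fun j => (lam j / (1 - (inner ℝ (x ε) (x j) : ℝ))) • cross (x j) (x ε)) ε = 0 := by
    have hc : cross (x ε) (x ε) = 0 := by
      ext k; fin_cases k <;> simp [cross] <;> ring
    simp only [hc, smul_zero]
  unfold vortexF
  rw [Finset.sum_erase
    (f := fun j => (lam j / (1 - (inner ℝ (x ε) (x j) : ℝ))) • cross (x j) (x ε))
    Finset.univ hzero]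
  ext k
  fin_cases ε <;> fin_cases k <;>
  · simp only [Fintype.sum_prod_type, Fin.sum_univ_two, hx, hlam, PiLp.inner_apply,
      Fin.sum_univ_three, Finset.sum_apply, PiLp.smul_apply, smul_eq_mul,
      cross, Matrix.cons_val_zero, Matrix.cons_val_one, Matrix.head_cons,
      Matrix.cons_val_two, Matrix.tail_cons, RCLike.inner_apply, conj_trivial,
      PiLp.zero_apply, WithLp.ofLp_sum, PiLp.toLp_apply, Real.inner_apply]
    norm_num
    ring_nf
end
end
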